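/- Let p be an odd prime, let c and e be nonzero elements of ℤ/pℤ, let d ∈ ℤ/pℤ with d² ≠ 1, and let f₀ ∈ ℤ/pℤ. Suppose x, y, u, v, w, z ∈ ℤ/pℤ are such that the quadratic function Q(i, j) = x·i² + y·j² + u·i·j + v·i + w·j + z satisfies Q(i + e, c·i + d·j + f₀) = Q(i, j) for all i, j ∈ ℤ/pℤ. Then x = y = u = v = w = 0, i.e. the affine map (i, j) ↦ (i + e, c·i + d·j + f₀) on (ℤ/pℤ)² admits no nonconstant quadratic hopping invariant when d² ≠ 1. -/
import Mathlib


/-- When `d² ≠ 1`, the affine map `(i,j) ↦ (i + e, c·i + d·j + f₀)` on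
`(ZMod p)²` (with `p` an odd prime, `c ≠ 0`, `e ≠ 0`) admits no nonconstant
quadratic hopping invariant. -/
theorem stmt_13 (p : ℕ) [Fact p.Prime] (hp : Odd p)
    (c e d f₀ : ZMod p) (hc : c ≠ 0) (he : e ≠ 0) (hd : d ^ 2 ≠ 1)
    (x y u v w z : ZMod p)
    (hQ : ∀ i j : ZMod p,
      x * (i + e) ^ 2 + y * (c * i + d * j + f₀) ^ 2
        + u * (i + e) * (c * i + d * j + f₀)
        + v * (i + e) + w * (c * i + d * j + f₀) + z
      = x * i ^ 2 + y * j ^ 2 + u * i * j + v * i + w * j + z) :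
    x = 0 ∧ y = 0 ∧ u = 0 ∧ v = 0 ∧ w = 0 := by
  have hp2 : p ≠ 2 := by
    rintro rfl; exact Nat.not_odd_iff_even.mpr (by decide) hp
  have h2 : (2 : ZMod p) ≠ 0 := by
    intro h
    have := (ZMod.natCast_eq_zero_iff 2 p).mp (by exact_mod_cast h)
    have := (Nat.prime_dvd_prime_iff_eq (Fact.out) Nat.prime_two).mp this
    exact hp2 this
  have hdsq : d ^ 2 - 1 ≠ 0 := sub_ne_zero.mpr hd
  have hd1 : d - 1 ≠ 0 := by
    intro h
    apply hd
    rw [sub_eq_zero.mp h]; ring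
  have hy : y = 0 := by
    have h : 2 * (y * (d ^ 2 - 1)) = 0 := by
      linear_combination (hQ 0 1) + (hQ 0 (-1)) - 2 * (hQ 0 0)
    rcases mul_eq_zero.mp h with h' | h'
    · exact absurd h' h2
    · rcases mul_eq_zero.mp h' with h'' | h''
      · exact h''
      · exact absurd h'' hdsq
  have hu : u = 0 := by
    have h : u * (d - 1) = 0 := by
      linear_combination (hQ 1 1) - (hQ 1 0) - (hQ 0 1) + (hQ 0 0) - (2 * c * d) * hy
    rcases mul_eq_zero.mp h with h' | h'
    · exact h'
    · exact absurd h' hd1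
  have hw : w = 0 := by
    have h : 2 * (w * (d - 1)) = 0 := by
      linear_combination (hQ 0 1) - (hQ 0 (-1)) + (-(4 * d * f₀)) * hy + (-(2 * e * d)) * hu
    rcases mul_eq_zero.mp h with h' | h'
    · exact absurd h' h2
    · rcases mul_eq_zero.mp h' with h'' | h''
      · exact h''
      · exact absurd h'' hd1
  have hx : x = 0 := by
    have h : 2 * (x * (2 * e)) = 0 := by
      linear_combination (hQ 1 0) - (hQ (-1) 0) - (4 * c * f₀) * hy
        - (2 * (f₀ + c * e)) * hu - (2 * c) * hw
    rcases mul_eq_zero.mp h with h' | h'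
    · exact absurd h' h2
    · rcases mul_eq_zero.mp h' with h'' | h''
      · exact h''
      · exact absurd h'' (mul_ne_zero h2 he)
  have hv : v = 0 := by
    have h : v * e = 0 := by
      linear_combination (hQ 0 0) - (e ^ 2) * hx - (f₀ ^ 2) * hy
        - (e * f₀) * hu - f₀ * hw
    rcases mul_eq_zero.mp h with h' | h'
    · exact h'
    · exact absurd h' he
  exact ⟨hx, hy, hu, hv, hw⟩
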